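/- arXiv:1908.05523 — 2 statements merged into one kernel-verified Lean document; each statement's English description precedes it below -/
import Mathlib

section
/- Let 0 < v < u < T. For any α ≤ 0 and β ∈ [0,1], we have |u^α - v^α| ≤ 2^{1-β} |α|^β |u - v|^β v^{α-β}. -/
open Real

theorem rpow_diff_neg_exponent (T u v α β : ℝ)
    (hv : 0 < v) (hvu : v < u) (huT : u < T)
    (hα : α ≤ 0) (hβ0 : 0 ≤ β) (hβ1 : β ≤ 1) :
    |u ^ α - v ^ α| ≤ 2 ^ (1 - β) * |α| ^ β * |u - v| ^ β * v ^ (α - β) := by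
  have hu : 0 < u := hv.trans hvu
  have hmono : u ^ α ≤ v ^ α := Real.rpow_le_rpow_of_nonpos hv hvu.le hα
  have huv : 0 < u - v := sub_pos.mpr hvu
  have hvα : 0 < v ^ α := Real.rpow_pos_of_pos hv α
  have huα : 0 < u ^ α := Real.rpow_pos_of_pos hu α
  set A : ℝ := v ^ α - u ^ α with hAdef
  have hA0 : 0 ≤ A := sub_nonneg.mpr hmono
  -- β = 1 type bound
  have key1 : A ≤ |α| * (u - v) * v ^ (α - 1) := by
    have ht : 0 < u / v := div_pos hu hv
    have hsplit : u ^ α = v ^ α * (u / v) ^ α := by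
      rw [Real.div_rpow hu.le hv.le]
      field_simp
    have hbern : 1 + α * Real.log (u / v) ≤ (u / v) ^ α := by
      rw [Real.rpow_def_of_pos ht]
      have := Real.add_one_le_exp (Real.log (u / v) * α)
      linarith [this]
    have hlog : Real.log (u / v) ≤ u / v - 1 := Real.log_le_sub_one_of_pos ht
    have hlog0 : 0 ≤ Real.log (u / v) := Real.log_nonneg (by
      rw [le_div_iff₀ hv]; linarith)
    have h1 : 1 - (u / v) ^ α ≤ (-α) * (u / v - 1) := by
      have h2 : (-α) * Real.log (u / v) ≤ (-α) * (u / v - 1) :=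
        mul_le_mul_of_nonneg_left hlog (by linarith)
      nlinarith [hbern]
    have : A = v ^ α * (1 - (u / v) ^ α) := by
      rw [hAdef, hsplit]; ring
    rw [this]
    have habs : |α| = -α := abs_of_nonpos hα
    have hstep : v ^ α * (1 - (u / v) ^ α) ≤ v ^ α * ((-α) * (u / v - 1)) :=
      mul_le_mul_of_nonneg_left h1 hvα.le
    refine hstep.trans (le_of_eq ?_)
    rw [habs, Real.rpow_sub_one hv.ne' α]
    rw [div_sub' hv.ne', mul_one, div_eq_mul_inv, div_eq_mul_inv]
    ring
  -- β = 0 type bound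
  have key0 : A ≤ 2 * v ^ α := by
    have : A ≤ v ^ α := by rw [hAdef]; linarith
    linarith
  have hLHS : |u ^ α - v ^ α| = A := by
    rw [abs_sub_comm, abs_of_nonneg hA0]
  rw [hLHS, abs_of_pos huv]
  rcases eq_or_lt_of_le hA0 with hA | hA
  · rw [← hA]
    positivity
  -- interpolation
  have hinterp : A = A ^ (1 - β) * A ^ β := by
    rw [← Real.rpow_add hA, sub_add_cancel, Real.rpow_one]
  rw [hinterp]
  have h1 : A ^ (1 - β) ≤ (2 * v ^ α) ^ (1 - β) :=
    Real.rpow_le_rpow hA0 key0 (by linarith)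
  have h2 : A ^ β ≤ (|α| * (u - v) * v ^ (α - 1)) ^ β :=
    Real.rpow_le_rpow hA0 key1 hβ0
  have hR1 : (2 * v ^ α) ^ (1 - β) = 2 ^ (1 - β) * v ^ (α * (1 - β)) := by
    rw [Real.mul_rpow (by norm_num) hvα.le, Real.rpow_mul hv.le]
  have hR2 : (|α| * (u - v) * v ^ (α - 1)) ^ β
      = |α| ^ β * (u - v) ^ β * v ^ ((α - 1) * β) := by
    rw [Real.mul_rpow (by positivity) (Real.rpow_pos_of_pos hv _).le,
      Real.mul_rpow (abs_nonneg α) huv.le, Real.rpow_mul hv.le]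
  calc A ^ (1 - β) * A ^ β
      ≤ (2 * v ^ α) ^ (1 - β) * (|α| * (u - v) * v ^ (α - 1)) ^ β := by
        apply mul_le_mul h1 h2 (Real.rpow_nonneg hA0 β) (by positivity)
    _ = 2 ^ (1 - β) * |α| ^ β * (u - v) ^ β * v ^ (α - β) := by
        rw [hR1, hR2, show α - β = α * (1 - β) + (α - 1) * β by ring,
          Real.rpow_add hv]
        ring
end

section
/- (Fractional Gronwall with Mittag-Leffler bound) Under the hypotheses of the fractional Gronwall inequality, if additionally a is nondecreasing on [0,T), then u(t) ≤ a(t) · E_β(g(t) Γ(β) t^β) for all t ∈ [0,T), where E_β(z) = ∑_{k=0}^∞ z^k / Γ(kβ + 1) is the Mittag-Leffler function. -/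
open MeasureTheory Set
open scoped ENNReal

lemma gamma_lb {β y : ℝ} (hβ : 0 < β) (hy : 2 ≤ y) :
    Real.Gamma y * (y - 1) ^ β ≤ Real.Gamma (y + β) := by
  have hy1 : (0:ℝ) < y - 1 := by linarith
  have hy0 : (0:ℝ) < y := by linarith
  have hyb : (0:ℝ) < y + β := by linarith
  have hslope := Real.convexOn_log_Gamma.slope_mono_adjacent
    (x := y - 1) (y := y) (z := y + β)
    (Set.mem_Ioi.2 hy1) (Set.mem_Ioi.2 hyb) (by linarith) (by linarith)
  have hGy1 : 0 < Real.Gamma (y - 1) := Real.Gamma_pos_of_pos hy1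
  have hGy : 0 < Real.Gamma y := Real.Gamma_pos_of_pos hy0
  have hGyb : 0 < Real.Gamma (y + β) := Real.Gamma_pos_of_pos hyb
  have hrec : Real.Gamma y = (y - 1) * Real.Gamma (y - 1) := by
    have := Real.Gamma_add_one (ne_of_gt hy1)
    rw [show y - 1 + 1 = y by ring] at this
    exact this
  have hlog : (Real.log ∘ Real.Gamma) y - (Real.log ∘ Real.Gamma) (y - 1) = Real.log (y - 1) := by
    simp only [Function.comp_apply, hrec, Real.log_mul (ne_of_gt hy1) (ne_of_gt hGy1)]
    ring
  rw [show y - (y - 1) = 1 by ring, show y + β - y = β by ring, hlog, div_one] at hslope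
  have h2 : β * Real.log (y - 1) ≤ (Real.log ∘ Real.Gamma) (y + β) - (Real.log ∘ Real.Gamma) y := by
    rw [mul_comm]
    exact (le_div_iff₀ hβ).1 hslope
  simp only [Function.comp_apply] at h2
  have h3 : Real.log (Real.Gamma y * (y - 1) ^ β) ≤ Real.log (Real.Gamma (y + β)) := by
    rw [Real.log_mul (ne_of_gt hGy) (by positivity), Real.log_rpow hy1]
    linarith
  have hpos : 0 < Real.Gamma y * (y - 1) ^ β := by positivity
  exact (Real.log_le_log_iff hpos hGyb).1 h3

lemma summB {β x : ℝ} (hβ : 0 < β) (hx : 0 ≤ x) :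
    Summable (fun k : ℕ => ((k : ℝ) + 1) * x ^ k / Real.Gamma (k * β + 1)) := by
  apply summable_of_ratio_norm_eventually_le (r := 1/2) (by norm_num)
  have h1 : Filter.Tendsto (fun k : ℕ => ((k : ℝ)) * β) Filter.atTop Filter.atTop :=
    Filter.Tendsto.atTop_mul_const hβ tendsto_natCast_atTop_atTop
  have h2 : Filter.Tendsto (fun k : ℕ => ((k : ℝ) * β) ^ β) Filter.atTop Filter.atTop :=
    (tendsto_rpow_atTop hβ).comp h1
  filter_upwards [h1.eventually_ge_atTop 1, h2.eventually_ge_atTop (4 * x)] with k hk1 hk2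
  have hΓk : 0 < Real.Gamma ((k : ℝ) * β + 1) := Real.Gamma_pos_of_pos (by positivity)
  have hΓk1 : 0 < Real.Gamma (((k : ℝ) + 1) * β + 1) := by
    apply Real.Gamma_pos_of_pos; nlinarith [hk1]
  have key : 4 * x * Real.Gamma ((k : ℝ) * β + 1) ≤ Real.Gamma (((k : ℝ) + 1) * β + 1) := by
    have := gamma_lb hβ (y := (k : ℝ) * β + 1) (by linarith)
    rw [show (k : ℝ) * β + 1 - 1 = (k : ℝ) * β by ring] at this
    calc 4 * x * Real.Gamma ((k : ℝ) * β + 1)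
        ≤ ((k : ℝ) * β) ^ β * Real.Gamma ((k : ℝ) * β + 1) := by nlinarith
      _ = Real.Gamma ((k : ℝ) * β + 1) * ((k : ℝ) * β) ^ β := by ring
      _ ≤ Real.Gamma ((k : ℝ) * β + 1 + β) := this
      _ = Real.Gamma (((k : ℝ) + 1) * β + 1) := by ring_nf
  push_cast
  rw [Real.norm_of_nonneg (by positivity), Real.norm_of_nonneg (by positivity)]
  rw [div_le_iff₀ hΓk1]
  have e1 : 1/2 * (((k:ℝ)+1) * x^k / Real.Gamma ((k:ℝ) * β + 1)) * (4 * x * Real.Gamma ((k:ℝ) * β + 1))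
      ≤ 1/2 * (((k:ℝ)+1) * x^k / Real.Gamma ((k:ℝ) * β + 1)) * Real.Gamma (((k:ℝ)+1) * β + 1) :=
    mul_le_mul_of_nonneg_left key (by positivity)
  have e2 : 1/2 * (((k:ℝ)+1) * x^k / Real.Gamma ((k:ℝ) * β + 1)) * (4 * x * Real.Gamma ((k:ℝ) * β + 1))
      = 2 * ((k:ℝ)+1) * x^(k+1) := by
    field_simp
    ring
  calc ((k:ℝ) + 1 + 1) * x ^ (k + 1) ≤ 2 * ((k:ℝ)+1) * x^(k+1) := by
        nlinarith [pow_nonneg hx (k+1)]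
    _ ≤ _ := by rw [← e2]; exact e1

lemma summMain {β x : ℝ} (hβ : 0 < β) (hx : 0 ≤ x) :
    Summable (fun k : ℕ => x ^ k / Real.Gamma (k * β + 1)) := by
  refine Summable.of_nonneg_of_le (fun k => ?_) (fun k => ?_) (summB hβ hx)
  · have := Real.Gamma_pos_of_pos (show (0:ℝ) < k * β + 1 by positivity)
    positivity
  · have hΓ := Real.Gamma_pos_of_pos (show (0:ℝ) < k * β + 1 by positivity)
    apply div_le_div_of_nonneg_right ?_ hΓ.le |>.trans_eq rfl
    nlinarith [pow_nonneg hx k, (Nat.cast_nonneg k : (0:ℝ) ≤ k)]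

lemma tendB {β x : ℝ} (hβ : 0 < β) (hx : 0 ≤ x) :
    Filter.Tendsto (fun k : ℕ => (k : ℝ) * x ^ k / Real.Gamma (k * β + 1))
      Filter.atTop (nhds 0) := by
  refine Summable.tendsto_atTop_zero ?_
  refine Summable.of_nonneg_of_le (fun k => ?_) (fun k => ?_) (summB hβ hx)
  · have := Real.Gamma_pos_of_pos (show (0:ℝ) < k * β + 1 by positivity)
    positivity
  · have hΓ := Real.Gamma_pos_of_pos (show (0:ℝ) < k * β + 1 by positivity)
    apply div_le_div_of_nonneg_right ?_ hΓ.le |>.trans_eq rfl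
    nlinarith [pow_nonneg hx k, (Nat.cast_nonneg k : (0:ℝ) ≤ k)]


lemma real_beta {p q : ℝ} (hp : 0 < p) (hq : 0 < q) :
    ∫ x in (0:ℝ)..1, x ^ (p-1) * (1-x) ^ (q-1)
      = Real.Gamma p * Real.Gamma q / Real.Gamma (p+q) := by
  have h := Complex.Gamma_mul_Gamma_eq_betaIntegral (s := (p:ℂ)) (t := (q:ℂ))
    (by simpa using hp) (by simpa using hq)
  have h2 : Complex.betaIntegral p q
      = ((∫ x in (0:ℝ)..1, x ^ (p-1) * (1-x) ^ (q-1) : ℝ) : ℂ) := by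
    rw [← intervalIntegral.integral_ofReal, Complex.betaIntegral]
    refine intervalIntegral.integral_congr fun x hx => ?_
    rw [Set.uIcc_of_le (by norm_num : (0:ℝ) ≤ 1)] at hx
    rw [Complex.ofReal_mul, Complex.ofReal_cpow hx.1,
      Complex.ofReal_cpow (by linarith [hx.2] : (0:ℝ) ≤ 1 - x)]
    push_cast
    ring
  rw [h2, ← Complex.ofReal_add, Complex.Gamma_ofReal, Complex.Gamma_ofReal,
    Complex.Gamma_ofReal, ← Complex.ofReal_mul, ← Complex.ofReal_mul] at h
  have hr := Complex.ofReal_inj.1 h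
  have hΓ : Real.Gamma (p + q) ≠ 0 := ne_of_gt (Real.Gamma_pos_of_pos (by linarith))
  field_simp
  linarith [hr]

lemma beta_integrable {p q c : ℝ} (hp : 0 < p) (hq : 0 < q) (hc : 0 < c) :
    IntervalIntegrable (fun x => x ^ (p-1) * (c - x) ^ (q-1)) MeasureTheory.volume 0 c := by
  have I1 : IntervalIntegrable (fun x => x ^ (p-1) * (c - x) ^ (q-1))
      MeasureTheory.volume 0 (c/2) := by
    apply IntervalIntegrable.mul_continuousOn (intervalIntegral.intervalIntegrable_rpow' (by linarith))
    apply ContinuousOn.rpow_const (by fun_prop)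
    intro x hx
    rw [Set.uIcc_of_le (by linarith : (0:ℝ) ≤ c/2)] at hx
    exact Or.inl (fun h => by nlinarith [hx.2])
  have I2 : IntervalIntegrable (fun x => x ^ (p-1) * (c - x) ^ (q-1))
      MeasureTheory.volume (c/2) c := by
    have base : IntervalIntegrable (fun x : ℝ => x ^ (q-1)) MeasureTheory.volume 0 (c/2) :=
      intervalIntegral.intervalIntegrable_rpow' (by linarith)
    have comp := (base.comp_sub_left c).symm
    rw [show c - c/2 = c/2 by ring, show c - 0 = c by ring] at comp
    have I2' := comp.mul_continuousOn (g := fun x => x ^ (p-1)) ?cont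
    · apply I2'.congr
      intro x _
      simp [mul_comm]
    case cont =>
      apply ContinuousOn.rpow_const (by fun_prop)
      intro x hx
      rw [Set.uIcc_of_le (by linarith : c/2 ≤ c)] at hx
      exact Or.inl (fun h => by nlinarith [hx.1])
  exact I1.trans I2


lemma scaled_beta {p q c : ℝ} (hp : 0 < p) (hq : 0 < q) (hc : 0 < c) :
    ∫ x in (0:ℝ)..c, x ^ (p-1) * (c - x) ^ (q-1)
      = Real.Gamma p * Real.Gamma q / Real.Gamma (p+q) * c ^ (p+q-1) := by
  have h1 : (∫ x in (0:ℝ)..c, x ^ (p-1) * (c - x) ^ (q-1))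
      = c • ∫ y in (0:ℝ)..1, (c * y) ^ (p-1) * (c - c * y) ^ (q-1) := by
    rw [intervalIntegral.smul_integral_comp_mul_left
      (f := fun x => x ^ (p-1) * (c - x) ^ (q-1)) c]
    norm_num
  rw [h1]
  have h2 : (∫ y in (0:ℝ)..1, (c * y) ^ (p-1) * (c - c * y) ^ (q-1))
      = ∫ y in (0:ℝ)..1, c ^ (p+q-2) * (y ^ (p-1) * (1-y) ^ (q-1)) := by
    refine intervalIntegral.integral_congr fun y hy => ?_
    rw [Set.uIcc_of_le (by norm_num : (0:ℝ) ≤ 1)] at hy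
    rw [show c - c * y = c * (1 - y) by ring, Real.mul_rpow hc.le hy.1,
      Real.mul_rpow hc.le (by linarith [hy.2])]
    rw [show c ^ (p-1) * y ^ (p-1) * (c ^ (q-1) * (1-y) ^ (q-1))
        = c ^ (p-1) * c ^ (q-1) * (y ^ (p-1) * (1-y) ^ (q-1)) by ring,
      ← Real.rpow_add hc, show p - 1 + (q - 1) = p + q - 2 by ring]
  have hcc : c * c ^ (p+q-2) = c ^ (p+q-1) := by
    nth_rewrite 1 [← Real.rpow_one c]
    rw [← Real.rpow_add hc]
    congr 1
    ring
  rw [h2, intervalIntegral.integral_const_mul, real_beta hp hq, smul_eq_mul, ← mul_assoc, hcc]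
  ring

lemma beta_lintegral {p q c : ℝ} (hp : 0 < p) (hq : 0 < q) (hc : 0 < c) :
    ∫⁻ x in Set.Ioc 0 c, ENNReal.ofReal (x ^ (p-1) * (c - x) ^ (q-1))
      = ENNReal.ofReal (Real.Gamma p * Real.Gamma q / Real.Gamma (p+q) * c ^ (p+q-1)) := by
  rw [← MeasureTheory.ofReal_integral_eq_lintegral_ofReal
    ((beta_integrable hp hq hc).1)]
  · rw [← intervalIntegral.integral_of_le hc.le, scaled_beta hp hq hc]
  · rw [Filter.EventuallyLE, ae_restrict_iff' measurableSet_Ioc]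
    filter_upwards with x hx
    exact mul_nonneg (Real.rpow_nonneg hx.1.le _)
      (Real.rpow_nonneg (by linarith [hx.2] : (0:ℝ) ≤ c - x) _)

lemma kernel_conv {A B w s : ℝ} (hA : 0 < A) (hB : 0 < B) (hws : w < s) :
    ∫⁻ r in Set.Ioc w s,
        ENNReal.ofReal ((s - r) ^ (A-1)) * ENNReal.ofReal ((r - w) ^ (B-1))
      = ENNReal.ofReal (Real.Gamma A * Real.Gamma B / Real.Gamma (A+B))
        * ENNReal.ofReal ((s - w) ^ (A+B-1)) := by
  have hmp := MeasureTheory.measurePreserving_add_right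
    (MeasureTheory.volume : MeasureTheory.Measure ℝ) w
  have hemb : MeasurableEmbedding (fun x : ℝ => x + w) := measurableEmbedding_addRight w
  have hpre : (fun x : ℝ => x + w) ⁻¹' Set.Ioc w s = Set.Ioc 0 (s - w) := by
    ext x; simp only [Set.mem_preimage, Set.mem_Ioc]
    constructor <;> rintro ⟨h1, h2⟩ <;> constructor <;> linarith
  have key := hmp.setLIntegral_comp_preimage_emb hemb
    (fun r => ENNReal.ofReal ((s - r) ^ (A-1)) * ENNReal.ofReal ((r - w) ^ (B-1)))
    (Set.Ioc w s)
  rw [hpre] at key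
  rw [← key]
  have congr1 : ∫⁻ x in Set.Ioc 0 (s - w),
      ENNReal.ofReal ((s - (x + w)) ^ (A-1)) * ENNReal.ofReal ((x + w - w) ^ (B-1))
      = ∫⁻ x in Set.Ioc 0 (s - w),
        ENNReal.ofReal (x ^ (B-1) * ((s - w) - x) ^ (A-1)) := by
    refine setLIntegral_congr_fun measurableSet_Ioc ?_
    intro x hx
    dsimp only
    rw [show s - (x + w) = (s - w) - x by ring, show x + w - w = x by ring]
    rw [ENNReal.ofReal_mul (Real.rpow_nonneg hx.1.le _), mul_comm]
  rw [congr1, beta_lintegral hB hA (by linarith)]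
  rw [← ENNReal.ofReal_mul (by positivity)]
  congr 1
  rw [show B + A = A + B by ring]
  ring


lemma kernel_swap {A B s : ℝ} (hA : 0 < A) (hB : 0 < B) (hs : 0 < s)
    (f : ℝ → ℝ≥0∞) (hf : AEMeasurable f (volume.restrict (Set.Ioc 0 s)))
    (hftop : ∀ x, f x ≠ ⊤) :
    ∫⁻ r in Set.Ioc 0 s, ENNReal.ofReal ((s - r) ^ (A-1))
        * ∫⁻ w in Set.Ioc 0 r, ENNReal.ofReal ((r - w) ^ (B-1)) * f w
      = ENNReal.ofReal (Real.Gamma A * Real.Gamma B / Real.Gamma (A+B)) *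
        ∫⁻ w in Set.Ioc 0 s, ENNReal.ofReal ((s - w) ^ (A+B-1)) * f w := by
  set μ := volume.restrict (Set.Ioc 0 s) with hμ
  set g : ℝ × ℝ → ℝ≥0∞ := fun p =>
    ENNReal.ofReal ((s - p.1) ^ (A-1)) * (ENNReal.ofReal ((p.1 - p.2) ^ (B-1)) * f p.2)
    with hgdef
  set S : Set (ℝ × ℝ) := {p : ℝ × ℝ | p.2 < p.1} with hSdef
  have hSm : MeasurableSet S := measurableSet_lt measurable_snd measurable_fst
  have hrp : Measurable fun x : ℝ => x ^ (A-1) := by measurability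
  have hrp2 : Measurable fun x : ℝ => x ^ (B-1) := by measurability
  have hk1 : Measurable fun p : ℝ × ℝ => ENNReal.ofReal ((s - p.1) ^ (A-1)) :=
    (hrp.comp (measurable_const.sub measurable_fst)).ennreal_ofReal
  have hk2 : Measurable fun p : ℝ × ℝ => ENNReal.ofReal ((p.1 - p.2) ^ (B-1)) :=
    (hrp2.comp (measurable_fst.sub measurable_snd)).ennreal_ofReal
  have hgm : AEMeasurable g (μ.prod μ) :=
    hk1.aemeasurable.mul (hk2.aemeasurable.mul hf.comp_snd)
  have hFm : AEMeasurable (Function.uncurry fun r w => S.indicator g (r, w)) (μ.prod μ) := by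
    have : (Function.uncurry fun r w => S.indicator g (r, w)) = S.indicator g := rfl
    rw [this]
    exact hgm.indicator hSm
  -- step 1 : rewrite LHS as double integral of indicator
  have step1 : ∀ r ∈ Set.Ioc 0 s,
      ENNReal.ofReal ((s - r) ^ (A-1))
        * ∫⁻ w in Set.Ioc 0 r, ENNReal.ofReal ((r - w) ^ (B-1)) * f w
      = ∫⁻ w, S.indicator g (r, w) ∂μ := by
    intro r hr
    have e1 : (fun w => S.indicator g (r, w))
        = (Set.Iio r).indicator (fun w => g (r, w)) := by
      funext w
      by_cases h : w < r <;> simp [hSdef, Set.indicator, h]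
    rw [e1, lintegral_indicator measurableSet_Iio, hμ,
      Measure.restrict_restrict measurableSet_Iio]
    have hIoo : Set.Iio r ∩ Set.Ioc 0 s = Set.Ioo 0 r := by
      ext w
      simp only [Set.mem_inter_iff, Set.mem_Iio, Set.mem_Ioc, Set.mem_Ioo]
      constructor
      · rintro ⟨h1, h2, h3⟩; exact ⟨h2, h1⟩
      · rintro ⟨h1, h2⟩; exact ⟨h2, h1, by linarith [hr.2]⟩
    rw [hIoo, setLIntegral_congr (Ioo_ae_eq_Ioc (a := (0:ℝ)) (b := r))]
    simp only [hgdef]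
    rw [lintegral_const_mul' _ _ ENNReal.ofReal_ne_top]
  have lhs_eq : ∫⁻ r in Set.Ioc 0 s, ENNReal.ofReal ((s - r) ^ (A-1))
        * ∫⁻ w in Set.Ioc 0 r, ENNReal.ofReal ((r - w) ^ (B-1)) * f w
      = ∫⁻ r, ∫⁻ w, S.indicator g (r, w) ∂μ ∂μ := by
    refine lintegral_congr_ae ?_
    filter_upwards [ae_restrict_mem measurableSet_Ioc] with r hr
    exact step1 r hr
  rw [lhs_eq, lintegral_lintegral_swap hFm]
  -- step 2 : inner integral after swapping
  have step2 : ∀ w ∈ Set.Ioo 0 s,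
      ∫⁻ r, S.indicator g (r, w) ∂μ
      = ENNReal.ofReal (Real.Gamma A * Real.Gamma B / Real.Gamma (A+B))
        * (ENNReal.ofReal ((s - w) ^ (A+B-1)) * f w) := by
    intro w hw
    have e2 : (fun r => S.indicator g (r, w))
        = fun r => ((Set.Ioi w).indicator
            (fun r => ENNReal.ofReal ((s - r) ^ (A-1))
              * ENNReal.ofReal ((r - w) ^ (B-1))) r) * f w := by
      funext r
      by_cases h : w < r <;> simp [hSdef, hgdef, Set.indicator, h, mul_assoc]
    rw [e2, lintegral_mul_const' _ _ (hftop w),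
      lintegral_indicator measurableSet_Ioi, hμ,
      Measure.restrict_restrict measurableSet_Ioi]
    have hIoc : Set.Ioi w ∩ Set.Ioc 0 s = Set.Ioc w s := by
      ext r
      simp only [Set.mem_inter_iff, Set.mem_Ioi, Set.mem_Ioc]
      constructor
      · rintro ⟨h1, h2, h3⟩; exact ⟨h1, h3⟩
      · rintro ⟨h1, h2⟩; exact ⟨h1, by linarith [hw.1], h2⟩
    rw [hIoc, kernel_conv hA hB hw.2, mul_assoc]
  have rhs_eq : ∫⁻ w, ∫⁻ r, S.indicator g (r, w) ∂μ ∂μ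
      = ∫⁻ w, ENNReal.ofReal (Real.Gamma A * Real.Gamma B / Real.Gamma (A+B))
        * (ENNReal.ofReal ((s - w) ^ (A+B-1)) * f w) ∂μ := by
    refine lintegral_congr_ae ?_
    have hne : ∀ᵐ w : ℝ ∂μ, w ≠ s :=
      Filter.Eventually.filter_mono (ae_mono Measure.restrict_le_self)
        (measure_eq_zero_iff_ae_notMem.1 (measure_singleton s))
    filter_upwards [ae_restrict_mem measurableSet_Ioc, hne] with w hw hwne
    exact step2 w ⟨hw.1, lt_of_le_of_ne hw.2 hwne⟩
  rw [rhs_eq, lintegral_const_mul' _ _ ENNReal.ofReal_ne_top]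


open MeasureTheory in
set_option maxHeartbeats 1000000 in
theorem fractional_gronwall_mittag_leffler (T β M : ℝ) (a g u : ℝ → ℝ)
    (hT : 0 < T) (hβ : 0 < β)
    (ha0 : ∀ t, 0 ≤ t → t < T → 0 ≤ a t)
    (ha_int : ∀ t, 0 ≤ t → t < T → IntervalIntegrable a volume 0 t)
    (ha_mono : ∀ s t, 0 ≤ s → s ≤ t → t < T → a s ≤ a t)
    (hg0 : ∀ t, 0 ≤ t → t < T → 0 ≤ g t)
    (hg_mono : ∀ s t, 0 ≤ s → s ≤ t → t < T → g s ≤ g t)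
    (hg_cont : ContinuousOn g (Set.Ico 0 T))
    (hgM : ∀ t, 0 ≤ t → t < T → g t ≤ M)
    (hu0 : ∀ t, 0 ≤ t → t < T → 0 ≤ u t)
    (hu_int : ∀ t, 0 ≤ t → t < T → IntervalIntegrable u volume 0 t)
    (hineq : ∀ t, 0 ≤ t → t < T →
      u t ≤ a t + g t * ∫ s in (0:ℝ)..t, (t - s) ^ (β - 1) * u s) :
    ∀ t, 0 ≤ t → t < T →
      u t ≤ a t * ∑' k : ℕ, (g t * Real.Gamma β * t ^ β) ^ k / Real.Gamma (k * β + 1) := by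
  intro t ht0 htT


  have hΓβ : 0 < Real.Gamma β := Real.Gamma_pos_of_pos hβ
  rcases ht0.eq_or_lt with h0 | ht0'
  · -- case t = 0
    subst h0
    have hx : g 0 * Real.Gamma β * (0:ℝ) ^ β = 0 := by
      rw [Real.zero_rpow hβ.ne', mul_zero]
    have hts : (∑' k : ℕ, (g 0 * Real.Gamma β * (0:ℝ) ^ β) ^ k / Real.Gamma (k * β + 1)) = 1 := by
      rw [hx]
      rw [tsum_eq_single 0 (fun k hk => by
        rw [zero_pow hk, zero_div])]
      norm_num [Real.Gamma_one]
    rw [hts, mul_one]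
    have := hineq 0 le_rfl hT
    simpa using this
  -- case 0 < t
  set A := a t with hA
  set G := g t with hG
  have hA0 : 0 ≤ A := ha0 t ht0 htT
  have hG0 : 0 ≤ G := hg0 t ht0 htT
  set c : ℝ := G * Real.Gamma β with hc
  have hc0 : 0 ≤ c := mul_nonneg hG0 hΓβ.le
  set x : ℝ := c * t ^ β with hxdef
  have hx0 : 0 ≤ x := mul_nonneg hc0 (Real.rpow_nonneg ht0 _)
  set f : ℝ → ℝ≥0∞ := fun y => ENNReal.ofReal (u y) with hf
  have hftop : ∀ y, f y ≠ ⊤ := fun y => ENNReal.ofReal_ne_top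
  have hfm : AEMeasurable f (volume.restrict (Set.Ioc 0 t)) :=
    ENNReal.measurable_ofReal.comp_aemeasurable
      ((hu_int t ht0 htT).1.aestronglyMeasurable.aemeasurable)
  have hfms : ∀ s, s ≤ t → AEMeasurable f (volume.restrict (Set.Ioc 0 s)) := fun s hst =>
    hfm.mono_measure (Measure.restrict_mono (Set.Ioc_subset_Ioc_right hst) le_rfl)
  -- base inequality
  have base : ∀ s, 0 ≤ s → s ≤ t →
      f s ≤ ENNReal.ofReal A + ENNReal.ofReal G *
        ∫⁻ r in Set.Ioc 0 s, ENNReal.ofReal ((s - r) ^ (β - 1)) * f r := by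
    intro s hs0 hst
    have hsT : s < T := lt_of_le_of_lt hst htT
    have hI := hineq s hs0 hsT
    have hIoc : (∫ r in (0:ℝ)..s, (s - r) ^ (β - 1) * u r)
        = ∫ r in Set.Ioc 0 s, (s - r) ^ (β - 1) * u r :=
      intervalIntegral.integral_of_le hs0
    have hptnn : ∀ r ∈ Set.Ioc 0 s, 0 ≤ (s - r) ^ (β - 1) * u r := by
      intro r hr
      exact mul_nonneg (Real.rpow_nonneg (by linarith [hr.2]) _)
        (hu0 r hr.1.le (by linarith [hr.2]))
    have hInn : 0 ≤ ∫ r in Set.Ioc 0 s, (s - r) ^ (β - 1) * u r :=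
      setIntegral_nonneg measurableSet_Ioc hptnn
    have hIle : ENNReal.ofReal (∫ r in Set.Ioc 0 s, (s - r) ^ (β - 1) * u r)
        ≤ ∫⁻ r in Set.Ioc 0 s, ENNReal.ofReal ((s - r) ^ (β - 1)) * f r := by
      calc ENNReal.ofReal (∫ r in Set.Ioc 0 s, (s - r) ^ (β - 1) * u r)
          = ↑‖∫ r in Set.Ioc 0 s, (s - r) ^ (β - 1) * u r‖₊ :=
            (Real.enorm_eq_ofReal hInn).symm
        _ ≤ ∫⁻ r in Set.Ioc 0 s, ↑‖(s - r) ^ (β - 1) * u r‖₊ :=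
            enorm_integral_le_lintegral_enorm _
        _ = ∫⁻ r in Set.Ioc 0 s, ENNReal.ofReal ((s - r) ^ (β - 1)) * f r := by
            refine setLIntegral_congr_fun measurableSet_Ioc ?_
            intro r hr
            dsimp only
            rw [show (‖(s - r) ^ (β - 1) * u r‖₊ : ℝ≥0∞) = ENNReal.ofReal ((s - r) ^ (β - 1) * u r)
                from Real.enorm_eq_ofReal (hptnn r hr),
              ENNReal.ofReal_mul (Real.rpow_nonneg (by linarith [hr.2]) _)]
    calc f s = ENNReal.ofReal (u s) := rfl
      _ ≤ ENNReal.ofReal (a s + g s * ∫ r in (0:ℝ)..s, (s - r) ^ (β - 1) * u r) :=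
          ENNReal.ofReal_le_ofReal hI
      _ ≤ ENNReal.ofReal (a s)
          + ENNReal.ofReal (g s * ∫ r in (0:ℝ)..s, (s - r) ^ (β - 1) * u r) :=
          ENNReal.ofReal_add_le
      _ ≤ ENNReal.ofReal A + ENNReal.ofReal G *
          ∫⁻ r in Set.Ioc 0 s, ENNReal.ofReal ((s - r) ^ (β - 1)) * f r := by
          refine add_le_add (ENNReal.ofReal_le_ofReal (ha_mono s t hs0 hst htT)) ?_
          rw [ENNReal.ofReal_mul (hg0 s hs0 hsT), hIoc]
          exact mul_le_mul' (ENNReal.ofReal_le_ofReal (hg_mono s t hs0 hst htT)) hIle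
  -- main induction
  have claim : ∀ n : ℕ, ∀ s, 0 ≤ s → s ≤ t →
      f s ≤ ENNReal.ofReal (∑ k ∈ Finset.range (n+1),
          A * c ^ k * s ^ ((k : ℝ) * β) / Real.Gamma ((k : ℝ) * β + 1))
        + ENNReal.ofReal (G ^ (n+1) * Real.Gamma β ^ (n+1) / Real.Gamma (((n : ℝ)+1) * β))
          * ∫⁻ r in Set.Ioc 0 s, ENNReal.ofReal ((s - r) ^ (((n : ℝ)+1) * β - 1)) * f r := by
    intro n
    induction n with
    | zero =>
      intro s hs0 hst
      have h := base s hs0 hst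
      simp only [Nat.cast_zero, zero_add, one_mul, pow_one, Finset.sum_range_one, zero_mul,
        Real.rpow_zero, Real.Gamma_one, mul_one, div_one, pow_zero]
      rw [mul_div_assoc, div_self hΓβ.ne', mul_one]
      exact h
    | succ n IH =>
      intro s hs0 hst
      have hq0 : 0 < ((n:ℝ)+1)*β := by positivity
      set q : ℝ := ((n:ℝ)+1)*β with hq
      have hΓq : 0 < Real.Gamma q := Real.Gamma_pos_of_pos hq0
      have hΓq1 : 0 < Real.Gamma (q+1) := Real.Gamma_pos_of_pos (by linarith)
      have hΓqb : 0 < Real.Gamma (q+β) := Real.Gamma_pos_of_pos (by linarith)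
      have hgoalcast : ((((n+1:ℕ)):ℝ)+1)*β = q + β := by push_cast; rw [hq]; ring
      rcases hs0.eq_or_lt with hs | hs
      · -- s = 0
        have hIH := IH 0 le_rfl ht0'.le
        rw [← hs]
        rw [Set.Ioc_self] at hIH ⊢
        simp only [Measure.restrict_empty, lintegral_zero_measure, mul_zero, add_zero] at hIH ⊢
        refine hIH.trans (ENNReal.ofReal_le_ofReal ?_)
        rw [Finset.sum_range_succ _ (n+1)]
        have hnn : 0 ≤ A * c ^ (n+1) * (0:ℝ) ^ (((n+1:ℕ):ℝ)*β) / Real.Gamma (((n+1:ℕ):ℝ)*β+1) := by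
          have h1 := Real.Gamma_pos_of_pos (show (0:ℝ) < ((n+1:ℕ):ℝ)*β+1 by positivity)
          have h2 : (0:ℝ) ≤ (0:ℝ) ^ (((n+1:ℕ):ℝ)*β) := Real.rpow_nonneg le_rfl _
          positivity
        linarith
      · -- 0 < s
        have hIH := IH s hs0 hst
        set J : ℝ≥0∞ := ∫⁻ r in Set.Ioc 0 s, ENNReal.ofReal ((s - r) ^ (q - 1)) * f r with hJ
        have hKm : Measurable fun r : ℝ => ENNReal.ofReal ((s - r) ^ (q - 1)) := by
          have : Measurable fun y : ℝ => y ^ (q-1) := by measurability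
          exact (this.comp (measurable_const.sub measurable_id)).ennreal_ofReal
        have hKint : (∫⁻ r in Set.Ioc 0 s, ENNReal.ofReal ((s - r) ^ (q - 1)))
            = ENNReal.ofReal (Real.Gamma q / Real.Gamma (q+1) * s ^ q) := by
          have hb := beta_lintegral (p := 1) (q := q) one_pos hq0 hs
          have he : ∀ y : ℝ, ENNReal.ofReal (y ^ ((1:ℝ)-1) * (s-y) ^ (q-1))
              = ENNReal.ofReal ((s-y) ^ (q-1)) := fun y => by
            norm_num
          simp_rw [he] at hb
          rw [show (1:ℝ)+q-1 = q by ring, show (1:ℝ)+q = q+1 by ring, Real.Gamma_one,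
            one_mul] at hb
          exact hb
        have step1 : J ≤ ∫⁻ r in Set.Ioc 0 s, ENNReal.ofReal ((s - r) ^ (q - 1)) *
            (ENNReal.ofReal A + ENNReal.ofReal G *
             ∫⁻ w in Set.Ioc 0 r, ENNReal.ofReal ((r - w) ^ (β - 1)) * f w) := by
          refine lintegral_mono_ae ?_
          refine (ae_restrict_iff' measurableSet_Ioc).2 (Filter.Eventually.of_forall
            fun r hr => ?_)
          exact mul_le_mul_right (base r hr.1.le (hr.2.trans hst)) _
        simp_rw [mul_add, mul_left_comm _ (ENNReal.ofReal G)] at step1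
        rw [lintegral_add_left (hKm.mul_const _),
          lintegral_mul_const' _ _ ENNReal.ofReal_ne_top,
          lintegral_const_mul' _ _ ENNReal.ofReal_ne_top,
          kernel_swap hq0 hβ hs f (hfms s hst) hftop, hKint] at step1
        set Jnew : ℝ≥0∞ := ∫⁻ w in Set.Ioc 0 s, ENNReal.ofReal ((s - w) ^ (q+β-1)) * f w
          with hJnew
        set D : ℝ≥0∞ := ENNReal.ofReal (G^(n+1) * Real.Gamma β^(n+1) / Real.Gamma q) with hD
        have hcomb : D * J ≤ ENNReal.ofReal (A * c^(n+1) * s^q / Real.Gamma (q+1))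
            + ENNReal.ofReal (G^(n+1+1) * Real.Gamma β^(n+1+1) / Real.Gamma (q+β)) * Jnew := by
          refine (mul_le_mul_right step1 D).trans ?_
          rw [mul_add]
          refine add_le_add ?_ ?_
          · rw [← mul_assoc, hD, ← ENNReal.ofReal_mul (by positivity),
              ← ENNReal.ofReal_mul (by positivity)]
            apply le_of_eq
            congr 1
            rw [hc]
            field_simp
            ring
          · have hre : D * (ENNReal.ofReal G *
                (ENNReal.ofReal (Real.Gamma q * Real.Gamma β / Real.Gamma (q+β)) * Jnew))
                = (D * ENNReal.ofReal G *
                  ENNReal.ofReal (Real.Gamma q * Real.Gamma β / Real.Gamma (q+β))) * Jnew := by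
              ring
            rw [hre, hD, ← ENNReal.ofReal_mul (by positivity),
              ← ENNReal.ofReal_mul (by positivity)]
            apply mul_le_mul_left
            apply le_of_eq
            congr 1
            field_simp
            ring
        have htermnn : ∀ k : ℕ, 0 ≤ A * c ^ k * s ^ ((k:ℝ)*β) / Real.Gamma ((k:ℝ)*β+1) := by
          intro k
          have h1 := Real.Gamma_pos_of_pos (show (0:ℝ) < (k:ℝ)*β+1 by positivity)
          have h2 : 0 ≤ s ^ ((k:ℝ)*β) := Real.rpow_nonneg hs0 _
          positivity
        have hcast2 : ((n+1:ℕ):ℝ)*β = q := by push_cast; rw [hq]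
        rw [hgoalcast]
        refine hIH.trans ?_
        refine (add_le_add_right hcomb _).trans ?_
        apply le_of_eq
        rw [← add_assoc, ← ENNReal.ofReal_add (Finset.sum_nonneg fun k _ => htermnn k)
          (by rw [← hcast2] at *; exact htermnn (n+1)),
          Finset.sum_range_succ _ (n+1), hcast2]
  -- finish
  set S := ∑' k : ℕ, x ^ k / Real.Gamma (k * β + 1) with hSdef
  have hsum : Summable (fun k : ℕ => x ^ k / Real.Gamma (k * β + 1)) := summMain hβ hx0
  have htermnn : ∀ k : ℕ, (0:ℝ) ≤ x ^ k / Real.Gamma ((k:ℝ) * β + 1) := by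
    intro k
    have h1 := Real.Gamma_pos_of_pos (show (0:ℝ) < (k:ℝ)*β+1 by positivity)
    positivity
  have hS0 : 0 ≤ S := tsum_nonneg htermnn
  have hL : (∫⁻ r in Set.Ioc 0 t, f r) < ⊤ := by
    have h2 := (hu_int t ht0 htT).1.2
    unfold MeasureTheory.HasFiniteIntegral at h2
    refine lt_of_le_of_lt (lintegral_mono fun r => ?_) h2
    exact le_trans (ENNReal.ofReal_le_ofReal (le_abs_self _))
      (le_of_eq (Real.enorm_eq_ofReal_abs _).symm)
  set L := ∫⁻ r in Set.Ioc 0 t, f r with hLdef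
  have hsum_le : ∀ n : ℕ, (∑ k ∈ Finset.range (n+1),
      A * c ^ k * t ^ ((k:ℝ) * β) / Real.Gamma ((k:ℝ) * β + 1)) ≤ A * S := by
    intro n
    have he : ∀ k : ℕ, A * c ^ k * t ^ ((k:ℝ)*β) / Real.Gamma ((k:ℝ)*β+1)
        = A * (x ^ k / Real.Gamma ((k:ℝ)*β+1)) := by
      intro k
      have ht1 : t ^ ((k:ℝ)*β) = (t ^ β) ^ (k:ℕ) := by
        rw [show ((k:ℝ))*β = β*((k:ℝ)) by ring, Real.rpow_mul ht0, Real.rpow_natCast]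
      rw [hxdef, mul_pow, ht1]
      ring
    simp_rw [he, ← Finset.mul_sum]
    refine mul_le_mul_of_nonneg_left ?_ hA0
    exact hsum.sum_le_tsum _ (fun k _ => htermnn k)
  set ρ : ℕ → ℝ := fun n => G^(n+1) * Real.Gamma β^(n+1) / Real.Gamma (((n:ℝ)+1)*β)
      * t ^ (((n:ℝ)+1)*β - 1) with hρdef
  have htail : ∀ n : ℕ, 1 ≤ ((n:ℝ)+1)*β →
      ENNReal.ofReal (G^(n+1) * Real.Gamma β^(n+1) / Real.Gamma (((n:ℝ)+1)*β)) *
        ∫⁻ r in Set.Ioc 0 t, ENNReal.ofReal ((t - r) ^ (((n:ℝ)+1)*β - 1)) * f r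
      ≤ ENNReal.ofReal (ρ n) * L := by
    intro n hn
    have hq0 : (0:ℝ) < ((n:ℝ)+1)*β := by positivity
    have hΓq := Real.Gamma_pos_of_pos hq0
    have hJle : (∫⁻ r in Set.Ioc 0 t, ENNReal.ofReal ((t - r) ^ (((n:ℝ)+1)*β - 1)) * f r)
        ≤ ENNReal.ofReal (t ^ (((n:ℝ)+1)*β - 1)) * L := by
      have hmono : ∀ r ∈ Set.Ioc (0:ℝ) t,
          ENNReal.ofReal ((t - r) ^ (((n:ℝ)+1)*β - 1)) * f r
          ≤ ENNReal.ofReal (t ^ (((n:ℝ)+1)*β - 1)) * f r := by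
        intro r hr
        refine mul_le_mul_left (ENNReal.ofReal_le_ofReal ?_) _
        exact Real.rpow_le_rpow (by linarith [hr.2]) (by linarith [hr.1]) (by linarith)
      calc (∫⁻ r in Set.Ioc 0 t, ENNReal.ofReal ((t - r) ^ (((n:ℝ)+1)*β - 1)) * f r)
          ≤ ∫⁻ r in Set.Ioc 0 t, ENNReal.ofReal (t ^ (((n:ℝ)+1)*β - 1)) * f r :=
            lintegral_mono_ae ((ae_restrict_iff' measurableSet_Ioc).2
              (Filter.Eventually.of_forall hmono))
        _ = ENNReal.ofReal (t ^ (((n:ℝ)+1)*β - 1)) * L :=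
            lintegral_const_mul' _ _ ENNReal.ofReal_ne_top
    calc ENNReal.ofReal (G^(n+1) * Real.Gamma β^(n+1) / Real.Gamma (((n:ℝ)+1)*β)) *
        ∫⁻ r in Set.Ioc 0 t, ENNReal.ofReal ((t - r) ^ (((n:ℝ)+1)*β - 1)) * f r
        ≤ ENNReal.ofReal (G^(n+1) * Real.Gamma β^(n+1) / Real.Gamma (((n:ℝ)+1)*β)) *
          (ENNReal.ofReal (t ^ (((n:ℝ)+1)*β - 1)) * L) := mul_le_mul_right hJle _
      _ = ENNReal.ofReal (ρ n) * L := by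
          rw [← mul_assoc, ← ENNReal.ofReal_mul (by positivity), hρdef]
  have hρ0 : Filter.Tendsto ρ Filter.atTop (nhds 0) := by
    have hb := (tendB hβ hx0).comp (Filter.tendsto_add_atTop_nat 1)
    have heq : ρ = fun n : ℕ => (β / t) *
        (((n:ℝ)+1) * x ^ (n+1) / Real.Gamma (((n:ℝ)+1)*β + 1)) := by
      funext n
      have hq0 : (0:ℝ) < ((n:ℝ)+1)*β := by positivity
      have hΓq := Real.Gamma_pos_of_pos hq0
      have hΓr : Real.Gamma (((n:ℝ)+1)*β+1) = (((n:ℝ)+1)*β) * Real.Gamma (((n:ℝ)+1)*β) :=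
        Real.Gamma_add_one hq0.ne'
      have ht1 : t ^ (((n:ℝ)+1)*β) = (t ^ β) ^ (n+1:ℕ) := by
        rw [show ((n:ℝ)+1)*β = β*((n:ℝ)+1) by ring, Real.rpow_mul ht0,
          ← Real.rpow_natCast (t^β) (n+1)]
        push_cast
        ring_nf
      have ht2 : t ^ (((n:ℝ)+1)*β - 1) = (t ^ β) ^ (n+1:ℕ) / t := by
        rw [Real.rpow_sub ht0', Real.rpow_one, ht1]
      rw [hρdef]
      simp only
      rw [ht2, hΓr, hxdef, hc, mul_pow, mul_pow]
      field_simp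
    rw [heq]
    have hb' : Filter.Tendsto (fun n : ℕ => ((n:ℝ)+1) * x ^ (n+1)
        / Real.Gamma (((n:ℝ)+1)*β + 1)) Filter.atTop (nhds 0) := by
      have : (fun n : ℕ => ((n:ℝ)+1) * x ^ (n+1) / Real.Gamma (((n:ℝ)+1)*β + 1))
          = (fun k : ℕ => (k:ℝ) * x ^ k / Real.Gamma ((k:ℝ) * β + 1)) ∘ (fun n => n + 1) := by
        funext n
        simp only [Function.comp_apply]
        push_cast
        ring_nf
      rw [this]
      exact hb
    simpa using hb'.const_mul (β / t)
  have hρ0' : Filter.Tendsto (fun n : ℕ => ENNReal.ofReal (ρ n) * L) Filter.atTop (nhds 0) := by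
    have h1 := ENNReal.tendsto_ofReal hρ0
    rw [ENNReal.ofReal_zero] at h1
    have h2 := ENNReal.Tendsto.mul_const h1 (Or.inr hL.ne)
    simpa using h2
  have hev : ∀ᶠ n : ℕ in Filter.atTop,
      f t ≤ ENNReal.ofReal (A * S) + ENNReal.ofReal (ρ n) * L := by
    have h1 : ∀ᶠ n : ℕ in Filter.atTop, 1 ≤ ((n:ℝ)+1)*β := by
      have ht2 : Filter.Tendsto (fun n : ℕ => ((n:ℝ)+1)*β) Filter.atTop Filter.atTop :=
        Filter.Tendsto.atTop_mul_const hβ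
          (Filter.tendsto_atTop_add_const_right _ 1 tendsto_natCast_atTop_atTop)
      exact ht2.eventually_ge_atTop 1
    filter_upwards [h1] with n hn
    refine (claim n t ht0 le_rfl).trans (add_le_add ?_ (htail n hn))
    exact ENNReal.ofReal_le_ofReal (hsum_le n)
  have hTend : Filter.Tendsto (fun n : ℕ => ENNReal.ofReal (A * S) + ENNReal.ofReal (ρ n) * L)
      Filter.atTop (nhds (ENNReal.ofReal (A * S))) := by
    have h3 := Filter.Tendsto.const_add (ENNReal.ofReal (A * S)) hρ0'
    simpa using h3
  have hft : f t ≤ ENNReal.ofReal (A * S) := ge_of_tendsto hTend hev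
  exact (ENNReal.ofReal_le_ofReal_iff (mul_nonneg hA0 hS0)).1 hft
end
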